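/- Let k be an algebraically closed field of characteristic 0 and let n ≥ 1. Then for a rational function f ∈ k(t) the following are equivalent: (i) there exist x₁, y₁, …, x_n, y_n ∈ k(t) with x_i³ + y_i³ = 1 for all i and f = x₁ + x₂·t + ⋯ + x_n·t^{n−1}; (ii) f is (the image in k(t) of) a polynomial in k[t] of degree at most n − 1. In particular, the set of polynomials of degree at most n − 1 is a diophantine subset of k(t). -/

import Mathlib

/-- A subset `D` of a commutative ring `R` is *diophantine* if there are finitely many
polynomials `F i` in variables `x, y₁, …, y_n` with coefficients in `R` such that
`r ∈ D` iff the system `F i (r, y₁, …, y_n) = 0` has a solution in `R`. -/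
def IsDiophantine {R : Type*} [CommRing R] (D : Set R) : Prop :=
  ∃ (m n : ℕ) (F : Fin m → MvPolynomial (Fin (n + 1)) R),
    ∀ r : R, r ∈ D ↔ ∃ y : Fin n → R,
      ∀ i : Fin m, MvPolynomial.eval (Fin.cons r y) (F i) = 0

section Helpers

open Polynomial UniqueFactorizationMonoid




theorem flt3_poly {k : Type*} [Field k] [CharZero k] {a b c : k[X]}
    (ha : a ≠ 0) (hb : b ≠ 0) (hc : c ≠ 0) (hab : IsCoprime a b)
    (heq : a ^ 3 + b ^ 3 = c ^ 3) :
    a.natDegree = 0 ∧ b.natDegree = 0 ∧ c.natDegree = 0 := by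
  classical
  have habp : IsCoprime (a ^ 3) (b ^ 3) := hab.pow
  have hbc3 : IsCoprime (b ^ 3) (c ^ 3) := by
    rw [← heq]
    simpa using habp.symm.add_mul_left_right 1
  have hca3 : IsCoprime (c ^ 3) (a ^ 3) := by
    rw [← heq]
    simpa [add_comm] using (habp.add_mul_left_right 1).symm
  set c' := -c with hc'
  have hc'0 : c' ≠ 0 := neg_ne_zero.mpr hc
  have hc'3 : c' ^ 3 = -(c ^ 3) := by rw [hc']; ring
  have hsum : a ^ 3 + b ^ 3 + c' ^ 3 = 0 := by rw [hc'3, heq]; ring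
  have hbc3' : IsCoprime (b ^ 3) (c' ^ 3) := by rw [hc'3]; exact hbc3.neg_right
  have hca3' : IsCoprime (c' ^ 3) (a ^ 3) := by rw [hc'3]; exact hca3.neg_left
  have ha3 : a ^ 3 ≠ 0 := pow_ne_zero _ ha
  have hb3 : b ^ 3 ≠ 0 := pow_ne_zero _ hb
  have hc3 : c' ^ 3 ≠ 0 := pow_ne_zero _ hc'0
  rcases Polynomial.abc ha3 hb3 hc3 habp hsum with h | ⟨da, db, dc⟩
  · exfalso
    have hprod : a ^ 3 * b ^ 3 * c' ^ 3 = (a * b * c') ^ 3 := by ring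
    rw [hprod, radical_pow _ (by norm_num : (3:ℕ) ≠ 0)] at h
    have habc : a * b * c' ≠ 0 := mul_ne_zero (mul_ne_zero ha hb) hc'0
    have hrad : (radical (a * b * c')).natDegree ≤ (a * b * c').natDegree :=
      Polynomial.natDegree_le_of_dvd (radical_dvd_self (a := a * b * c')) habc
    have hdeg : (a * b * c').natDegree = a.natDegree + b.natDegree + c'.natDegree := by
      rw [Polynomial.natDegree_mul (mul_ne_zero ha hb) hc'0, Polynomial.natDegree_mul ha hb]
    have e1 : (a ^ 3).natDegree = 3 * a.natDegree := Polynomial.natDegree_pow a 3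
    have e2 : (b ^ 3).natDegree = 3 * b.natDegree := Polynomial.natDegree_pow b 3
    have e3 : (c' ^ 3).natDegree = 3 * c'.natDegree := Polynomial.natDegree_pow c' 3
    obtain ⟨h1, h2, h3⟩ := h
    omega
  · have derivzero : ∀ {p : k[X]}, p ≠ 0 → derivative (p ^ 3) = 0 → p.natDegree = 0 := by
      intro p hp hd
      rw [Polynomial.derivative_pow] at hd
      have : derivative p = 0 := by
        rcases mul_eq_zero.mp hd with h | h
        · rcases mul_eq_zero.mp h with h' | h'
          · exact absurd h' (by simp)
          · exact absurd h' (pow_ne_zero 2 hp)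
        · exact h
      exact Polynomial.natDegree_eq_zero_of_derivative_eq_zero this
    have hcc : c.natDegree = 0 := by
      have := derivzero hc'0 dc
      simpa [hc'] using this
    exact ⟨derivzero ha da, derivzero hb db, hcc⟩

theorem cubic_sol_const {k : Type*} [Field k] [IsAlgClosed k] [CharZero k] {x y : RatFunc k}
    (h : x ^ 3 + y ^ 3 = 1) : ∃ u : k, x = RatFunc.C u := by
  classical
  by_cases hx : x = 0
  · exact ⟨0, by simp [hx]⟩
  by_cases hy : y = 0
  · -- x ^ 3 = 1
    have hx3 : x ^ 3 = 1 := by rw [hy] at h; simpa using h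
    have hdeg : (Polynomial.X ^ 2 + Polynomial.X + 1 : Polynomial k).degree = 2 := by
      compute_degree!
    obtain ⟨z, hz⟩ := IsAlgClosed.exists_root
      (p := (Polynomial.X ^ 2 + Polynomial.X + 1 : Polynomial k)) (by rw [hdeg]; norm_num)
    have hzeq : z ^ 2 + z + 1 = 0 := by
      simpa using hz
    set w := RatFunc.C z with hwdef
    have hw : w ^ 2 + w + 1 = 0 := by
      have := congrArg RatFunc.C hzeq
      simpa [map_add, map_pow] using this
    have factor : (x - 1) * (x - w) * (x + 1 + w) = 0 := by
      have hfac : (x - 1) * (x - w) * (x + 1 + w)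
          = x ^ 3 - 1 + (1 - x) * (w ^ 2 + w + 1) := by ring
      rw [hfac, hx3, hw]; ring
    rcases mul_eq_zero.mp factor with h1 | h2
    · rcases mul_eq_zero.mp h1 with h3 | h4
      · exact ⟨1, by rw [map_one]; linear_combination h3⟩
      · exact ⟨z, sub_eq_zero.mp h4⟩
    · refine ⟨-1 - z, ?_⟩
      have : x = -1 - w := by linear_combination h2
      rw [this, map_sub, map_neg, map_one]
  · set φ := algebraMap (Polynomial k) (RatFunc k) with hφ
    have hφinj : Function.Injective φ := RatFunc.algebraMap_injective k
    set p := x.num with hpdef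
    set q := x.denom with hqdef
    set r := y.num with hrdef
    set s := y.denom with hsdef
    have hq : q ≠ 0 := x.denom_ne_zero
    have hs : s ≠ 0 := y.denom_ne_zero
    have hp : p ≠ 0 := RatFunc.num_ne_zero hx
    have hr : r ≠ 0 := RatFunc.num_ne_zero hy
    have hxe : φ p / φ q = x := x.num_div_denom
    have hye : φ r / φ s = y := y.num_div_denom
    have hqz : φ q ≠ 0 := RatFunc.algebraMap_ne_zero hq
    have hsz : φ s ≠ 0 := RatFunc.algebraMap_ne_zero hs
    have key : (p * s) ^ 3 + (r * q) ^ 3 = (q * s) ^ 3 := by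
      apply hφinj
      push_cast [map_add, map_mul, map_pow]
      rw [← hxe, ← hye] at h
      field_simp at h
      linear_combination h
    set A := p * s with hA
    set B := r * q with hB
    set Cc := q * s with hCc
    have hA0 : A ≠ 0 := mul_ne_zero hp hs
    have hB0 : B ≠ 0 := mul_ne_zero hr hq
    have hC0 : Cc ≠ 0 := mul_ne_zero hq hs
    set g := GCDMonoid.gcd A B with hg
    have hg0 : g ≠ 0 := gcd_ne_zero_of_left hA0
    have hgA : g ∣ A := gcd_dvd_left A B
    have hgB : g ∣ B := gcd_dvd_right A B
    have hgC : g ∣ Cc := by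
      have h3 : g ^ 3 ∣ Cc ^ 3 := by
        rw [← key]
        exact dvd_add (pow_dvd_pow_of_dvd hgA 3) (pow_dvd_pow_of_dvd hgB 3)
      exact (IsIntegrallyClosed.pow_dvd_pow_iff (by norm_num : (3:ℕ) ≠ 0)).mp h3
    set a' := A / g with ha'
    set b' := B / g with hb'
    set c' := Cc / g with hc'
    have hAe : g * a' = A := EuclideanDomain.mul_div_cancel' hg0 hgA
    have hBe : g * b' = B := EuclideanDomain.mul_div_cancel' hg0 hgB
    have hCe : g * c' = Cc := EuclideanDomain.mul_div_cancel' hg0 hgC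
    have ha0 : a' ≠ 0 := fun hh => hA0 (by rw [← hAe, hh, mul_zero])
    have hb0 : b' ≠ 0 := fun hh => hB0 (by rw [← hBe, hh, mul_zero])
    have hc0 : c' ≠ 0 := fun hh => hC0 (by rw [← hCe, hh, mul_zero])
    have hcop : IsCoprime a' b' := isCoprime_div_gcd_div_gcd hB0
    have keq : a' ^ 3 + b' ^ 3 = c' ^ 3 := by
      have : g ^ 3 * (a' ^ 3 + b' ^ 3) = g ^ 3 * c' ^ 3 := by
        rw [mul_add, ← mul_pow, ← mul_pow, ← mul_pow, hAe, hBe, hCe, key]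
      exact mul_left_cancel₀ (pow_ne_zero _ hg0) this
    obtain ⟨d1, d2, d3⟩ := flt3_poly ha0 hb0 hc0 hcop keq
    obtain ⟨u, hu⟩ := Polynomial.natDegree_eq_zero.mp d1
    obtain ⟨v, hv⟩ := Polynomial.natDegree_eq_zero.mp d3
    have hv0 : v ≠ 0 := fun hh => hc0 (by rw [← hv, hh, map_zero])
    refine ⟨u / v, ?_⟩
    have hx2 : x = φ A / φ Cc := by
      rw [hA, hCc, map_mul, map_mul, mul_div_mul_right _ _ hsz, hxe]
    rw [hx2, ← hAe, ← hCe, ← hu, ← hv, map_mul, map_mul, RatFunc.algebraMap_C,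
      RatFunc.algebraMap_C, mul_div_mul_left _ _ (RatFunc.algebraMap_ne_zero hg0), map_div₀]


theorem main_iff (k : Type*) [Field k] [IsAlgClosed k] [CharZero k] (n : ℕ) (hn : 1 ≤ n)
    (f : RatFunc k) :
    (∃ x y : Fin n → RatFunc k,
        (∀ i, x i ^ 3 + y i ^ 3 = 1) ∧
        f = ∑ i : Fin n, x i * RatFunc.X ^ (i : ℕ)) ↔
    (∃ p : Polynomial k, p.degree ≤ (n - 1 : ℕ) ∧
        f = algebraMap (Polynomial k) (RatFunc k) p) := by
  constructor
  · rintro ⟨x, y, hcube, hf⟩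
    have hconst : ∀ i, ∃ u : k, x i = RatFunc.C u := fun i => cubic_sol_const (hcube i)
    choose c hc using hconst
    refine ⟨∑ i : Fin n, Polynomial.C (c i) * Polynomial.X ^ (i : ℕ), ?_, ?_⟩
    · refine (Polynomial.degree_sum_le _ _).trans ?_
      apply Finset.sup_le
      intro i _
      refine (Polynomial.degree_C_mul_X_pow_le _ _).trans ?_
      exact_mod_cast Nat.cast_le.mpr (by omega : (i : ℕ) ≤ n - 1)
    · rw [hf, map_sum]
      refine Finset.sum_congr rfl fun i _ => ?_
      rw [map_mul, map_pow, RatFunc.algebraMap_C, RatFunc.algebraMap_X, hc i]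
  · rintro ⟨p, hdeg, hf⟩
    have hy : ∀ i : Fin n, ∃ r : k, r ^ 3 = 1 - (p.coeff i) ^ 3 := fun i =>
      IsAlgClosed.exists_pow_nat_eq _ (by norm_num)
    choose r hr using hy
    refine ⟨fun i => RatFunc.C (p.coeff i), fun i => RatFunc.C (r i), fun i => ?_, ?_⟩
    · rw [← map_pow, ← map_pow, ← map_add, hr i]
      simp
    · have hnd : p.natDegree < n := by
        have := Polynomial.natDegree_le_iff_degree_le.mpr hdeg
        omega
      conv_lhs => rw [hf, p.as_sum_range' n hnd]
      rw [map_sum]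
      rw [← Fin.sum_univ_eq_sum_range
        (fun i => algebraMap (Polynomial k) (RatFunc k) (Polynomial.monomial i (p.coeff i))) n]
      refine Finset.sum_congr rfl fun i _ => ?_
      rw [← Polynomial.C_mul_X_pow_eq_monomial, map_mul, map_pow, RatFunc.algebraMap_C,
        RatFunc.algebraMap_X]


end Helpers

open MvPolynomial in
theorem dio (k : Type*) [Field k] [IsAlgClosed k] [CharZero k] (n : ℕ) (hn : 1 ≤ n) :
    IsDiophantine {f : RatFunc k | ∃ p : Polynomial k, p.degree ≤ (n - 1 : ℕ) ∧
        f = algebraMap (Polynomial k) (RatFunc k) p} := by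
  refine ⟨n + 1, n + n, Fin.cons
    (X 0 - ∑ i : Fin n, C (RatFunc.X ^ (i : ℕ)) * X ((Fin.castAdd n i).succ))
    (fun i => X ((Fin.castAdd n i).succ) ^ 3 + X ((Fin.natAdd n i).succ) ^ 3 - 1), fun r => ?_⟩
  rw [Set.mem_setOf_eq, ← main_iff k n hn r]
  constructor
  · rintro ⟨x, y, hcube, hf⟩
    refine ⟨Fin.append x y, fun i => ?_⟩
    refine Fin.cases ?_ (fun j => ?_) i
    · simp only [Fin.cons_zero, map_sub, map_sum, map_mul, eval_X, eval_C, Fin.cons_succ,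
        Fin.append_left]
      rw [sub_eq_zero, hf]
      exact Finset.sum_congr rfl fun i _ => mul_comm _ _
    · simp only [Fin.cons_succ, map_sub, map_add, map_pow, map_one, eval_X,
        Fin.append_left, Fin.append_right]
      rw [sub_eq_zero, hcube j]
  · rintro ⟨w, hw⟩
    refine ⟨fun i => w (Fin.castAdd n i), fun i => w (Fin.natAdd n i), fun i => ?_, ?_⟩
    · have := hw (Fin.succ i)
      simp only [Fin.cons_succ, map_sub, map_add, map_pow, map_one, eval_X] at this
      linear_combination this
    · have := hw 0
      simp only [Fin.cons_zero, map_sub, map_sum, map_mul, eval_X, eval_C, Fin.cons_succ] at this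
      rw [sub_eq_zero] at this
      rw [this]
      exact Finset.sum_congr rfl fun i _ => mul_comm _ _



theorem fermat_cubic_diophantine_set_algClosed
    (k : Type*) [Field k] [IsAlgClosed k] [CharZero k] (n : ℕ) (hn : 1 ≤ n) :
    (∀ f : RatFunc k,
        (∃ x y : Fin n → RatFunc k,
            (∀ i, x i ^ 3 + y i ^ 3 = 1) ∧
            f = ∑ i : Fin n, x i * RatFunc.X ^ (i : ℕ)) ↔
        (∃ p : Polynomial k, p.degree ≤ (n - 1 : ℕ) ∧
            f = algebraMap (Polynomial k) (RatFunc k) p)) ∧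
    IsDiophantine {f : RatFunc k | ∃ p : Polynomial k, p.degree ≤ (n - 1 : ℕ) ∧
        f = algebraMap (Polynomial k) (RatFunc k) p} := by
  exact ⟨main_iff k n hn, dio k n hn⟩
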